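/- For any two nonempty metric spaces X and X', the Nagata dimension of the product satisfies dim_N(X × X') ≤ dim_N X + dim_N X', where X × X' carries (for example) the sup metric. -/

import Mathlib

open Metric Set

/-- `X` has Nagata dimension at most `n` (witnessed by some constant `c > 0`):
for every `s > 0` there is a covering by sets of diameter `≤ c * s` such that every
set of diameter `≤ s` meets at most `n + 1` members of the covering. -/
def NagataProp (X : Type*) [MetricSpace X] (n : ℕ) : Prop :=
  ∃ c : ℝ, 0 < c ∧ ∀ s : ℝ, 0 < s → ∃ 𝓑 : Set (Set X),
    (⋃₀ 𝓑 = univ) ∧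
    (∀ B ∈ 𝓑, EMetric.diam B ≤ ENNReal.ofReal (c * s)) ∧
    (∀ E : Set X, EMetric.diam E ≤ ENNReal.ofReal s →
      ∃ T : Finset (Set X), T.card ≤ n + 1 ∧
        ∀ B ∈ 𝓑, (B ∩ E).Nonempty → B ∈ T)

/-- The Nagata (Assouad–Nagata) dimension of a metric space, as an element of `ℕ∞`. -/
noncomputable def nagataDim (X : Type*) [MetricSpace X] : ℕ∞ :=
  sInf {k : ℕ∞ | ∃ n : ℕ, k = n ∧ NagataProp X n}

open Classical

private lemma quot_diff {a a' F F' M e s : ℝ} (hs : 0 < s) (hF : s ≤ F) (hF' : s ≤ F')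
    (ha : 0 ≤ a) (haM : a ≤ M) (hae : |a - a'| ≤ e) (hFe : |F - F'| ≤ e) :
    |a / F - a' / F'| ≤ e / s + M * e / s ^ 2 := by
  have hF0 : 0 < F := lt_of_lt_of_le hs hF
  have hF0' : 0 < F' := lt_of_lt_of_le hs hF'
  have he : 0 ≤ e := le_trans (abs_nonneg _) hae
  have hM : 0 ≤ M := le_trans ha haM
  have hid : a / F - a' / F' = (a - a') / F' + a * (F' - F) / (F * F') := by
    field_simp; ring
  rw [hid]
  have h1 : |(a - a') / F'| ≤ e / s := by
    rw [abs_div, abs_of_pos hF0']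
    exact div_le_div₀ he hae hs hF'
  have h2 : |a * (F' - F) / (F * F')| ≤ M * e / s ^ 2 := by
    rw [abs_div, abs_of_pos (mul_pos hF0 hF0'), abs_mul]
    apply div_le_div₀ (by positivity) ?_ (by positivity) ?_
    · rw [abs_of_nonneg ha]
      exact mul_le_mul haM (by rwa [abs_sub_comm] at hFe) (abs_nonneg _) hM
    · rw [sq]; exact mul_le_mul hF hF' hs.le (le_trans hs.le hF)
  calc |(a - a') / F' + a * (F' - F) / (F * F')|
      ≤ |(a - a') / F'| + |a * (F' - F) / (F * F')| := abs_add_le _ _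
    _ ≤ e / s + M * e / s ^ 2 := add_le_add h1 h2

private lemma exists_pkg {X : Type*} [MetricSpace X] {n : ℕ} (hX : NagataProp X n) :
    ∃ c : ℝ, 1 ≤ c ∧ ∀ s : ℝ, 0 < s →
      ∃ (ℬ : Set (Set X)) (L R : Set X → X → ℝ),
        (∀ x, ∃ T : Finset (Set X), T.card ≤ n + 1 ∧
            ∀ B ∈ ℬ, L B x < R B x → B ∈ T) ∧
        (∀ x, ∀ B ∈ ℬ, ∀ B' ∈ ℬ, B ≠ B' →
            min (R B x) (R B' x) ≤ max (L B x) (L B' x)) ∧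
        (∀ x, ∀ B ∈ ℬ, 0 ≤ L B x ∧ L B x ≤ R B x ∧ R B x ≤ 1) ∧
        (∀ x, ∀ t : ℝ, 0 ≤ t → t < 1 → ∃ B ∈ ℬ, L B x ≤ t ∧ t < R B x) ∧
        (∀ x, ∃ B ∈ ℬ, 1 / (n + 1) ≤ R B x - L B x) ∧
        (∀ B ∈ ℬ, ∀ x x', |L B x - L B x'| ≤ 3 * (n + 2) ^ 2 / s * dist x x' ∧
            |R B x - R B x'| ≤ 3 * (n + 2) ^ 2 / s * dist x x') ∧
        (∀ B ∈ ℬ, ∀ x x', L B x < R B x → L B x' < R B x' → dist x x' ≤ c * s) := by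
  classical
  obtain ⟨c₀, hc₀, H⟩ := hX
  refine ⟨2 * c₀ + 2, by linarith, ?_⟩
  intro s hs
  obtain ⟨𝓑₀, hcov, hdiam, hmult⟩ := H (2 * s) (by linarith)
  set key : Set X → Ordinal := fun B => Ordinal.typein (@WellOrderingRel (Set X)) B with hkeydef
  have hkeyinj : ∀ B B', key B = key B' → B = B' := fun B B' h => Ordinal.typein_injective _ h
  have hkey_tri : ∀ B B' : Set X, B ≠ B' → key B < key B' ∨ key B' < key B := by
    intro B B' hne
    rcases lt_trichotomy (key B) (key B') with h | h | h
    · exact Or.inl h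
    · exact absurd (hkeyinj _ _ h) hne
    · exact Or.inr h
  set ℬ : Set (Set X) := {B ∈ 𝓑₀ | B.Nonempty} with hℬdef
  set f : Set X → X → ℝ := fun B x => max (s - infDist x B) 0 with hfdef
  have hfrfl : ∀ B x, f B x = max (s - infDist x B) 0 := fun _ _ => rfl
  have hf_nonneg : ∀ B x, 0 ≤ f B x := fun B x => le_max_right _ _
  have hf_le : ∀ B x, f B x ≤ s := fun B x =>
    max_le (by have := infDist_nonneg (s := B) (x := x); linarith) hs.le
  have hf_lip : ∀ B x x', |f B x - f B x'| ≤ dist x x' := by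
    intro B x x'
    refine le_trans (abs_max_sub_max_le_abs _ _ _) ?_
    have h1 : infDist x B ≤ infDist x' B + dist x x' := infDist_le_infDist_add_dist
    have h2 : infDist x' B ≤ infDist x B + dist x' x := infDist_le_infDist_add_dist
    rw [dist_comm x' x] at h2
    rw [abs_le]; constructor <;> [linarith; linarith]
  have hf_pos : ∀ B x, 0 < f B x ↔ infDist x B < s := by
    intro B x
    rw [hfrfl]; simp only [lt_max_iff]
    constructor
    · rintro (h | h) <;> [linarith; linarith]
    · intro h; left; linarith
  have hmem_ball : ∀ B, B ∈ ℬ → ∀ x, 0 < f B x → ∃ b ∈ B, dist x b < s := by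
    intro B hB x hf
    exact (infDist_lt_iff hB.2).mp ((hf_pos B x).mp hf)
  have hTx : ∀ x, ∃ T : Finset (Set X), T.card ≤ n + 1 ∧
      ∀ B, B ∈ ℬ → 0 < f B x → B ∈ T := by
    intro x
    have hdb : EMetric.diam (closedBall x s) ≤ ENNReal.ofReal (2 * s) := by
      apply EMetric.diam_le
      intro a ha b hb
      rw [edist_dist]
      apply ENNReal.ofReal_le_ofReal
      rw [mem_closedBall] at ha hb
      calc dist a b ≤ dist a x + dist x b := dist_triangle _ _ _
        _ ≤ 2 * s := by rw [dist_comm x b]; linarith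
    obtain ⟨T, hTc, hTm⟩ := hmult (closedBall x s) hdb
    refine ⟨T, hTc, fun B hB hf => ?_⟩
    obtain ⟨b, hbB, hbd⟩ := hmem_ball B hB x hf
    exact hTm B hB.1 ⟨b, hbB, mem_closedBall.mpr (by rw [dist_comm]; exact hbd.le)⟩
  have hfin : ∀ x, {B | B ∈ ℬ ∧ 0 < f B x}.Finite := by
    intro x
    obtain ⟨T, -, hTm⟩ := hTx x
    exact Set.Finite.subset T.finite_toSet (fun B hB => hTm B hB.1 hB.2)
  set S : X → Finset (Set X) := fun x => (hfin x).toFinset with hSdef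
  have hSmem : ∀ x B, B ∈ S x ↔ B ∈ ℬ ∧ 0 < f B x := fun x B => (hfin x).mem_toFinset
  have hScard : ∀ x, (S x).card ≤ n + 1 := by
    intro x
    obtain ⟨T, hTc, hTm⟩ := hTx x
    refine le_trans (Finset.card_le_card ?_) hTc
    intro B hB
    rw [hSmem] at hB
    exact hTm B hB.1 hB.2
  set F : X → ℝ := fun x => ∑ B ∈ S x, f B x with hFdef
  have hFrfl : ∀ x, F x = ∑ B ∈ S x, f B x := fun _ => rfl
  set L : Set X → X → ℝ :=
    fun B x => (∑ B' ∈ (S x).filter (fun Bp => key Bp < key B), f B' x) / F x with hLdef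
  have hLrfl : ∀ B x,
      L B x = (∑ B' ∈ (S x).filter (fun Bp => key Bp < key B), f B' x) / F x := fun _ _ => rfl
  set R : Set X → X → ℝ := fun B x => L B x + f B x / F x with hRdef
  have hRrfl : ∀ B x, R B x = L B x + f B x / F x := fun _ _ => rfl
  have hB0 : ∀ x, ∃ B ∈ S x, f B x = s := by
    intro x
    have hx : x ∈ ⋃₀ 𝓑₀ := by rw [hcov]; exact mem_univ x
    obtain ⟨B₀, hB₀, hxB₀⟩ := mem_sUnion.mp hx
    have hfB₀ : f B₀ x = s := by
      rw [hfrfl]; simp only [infDist_zero_of_mem hxB₀, sub_zero]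
      exact max_eq_left hs.le
    exact ⟨B₀, (hSmem x B₀).mpr ⟨⟨hB₀, ⟨x, hxB₀⟩⟩, by rw [hfB₀]; exact hs⟩, hfB₀⟩
  have hSne : ∀ x, (S x).Nonempty := fun x => by
    obtain ⟨B, hB, -⟩ := hB0 x; exact ⟨B, hB⟩
  have hFlb : ∀ x, s ≤ F x := by
    intro x
    obtain ⟨B₀, hB₀, hfB₀⟩ := hB0 x
    calc s = f B₀ x := hfB₀.symm
      _ ≤ F x := Finset.single_le_sum (fun B _ => hf_nonneg B x) hB₀
  have hF0 : ∀ x, 0 < F x := fun x => lt_of_lt_of_le hs (hFlb x)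
  have hFub : ∀ x, F x ≤ (n + 1) * s := by
    intro x
    calc F x ≤ (S x).card • s := Finset.sum_le_card_nsmul _ _ _ (fun B _ => hf_le B x)
      _ = ((S x).card : ℝ) * s := nsmul_eq_mul _ _
      _ ≤ (n + 1) * s := by
          apply mul_le_mul_of_nonneg_right _ hs.le
          exact_mod_cast hScard x
  have hf_zero : ∀ x B, B ∈ ℬ → B ∉ S x → f B x = 0 := by
    intro x B hB hBS
    by_contra h
    exact hBS ((hSmem x B).mpr ⟨hB, lt_of_le_of_ne (hf_nonneg B x) (Ne.symm h)⟩)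
  have hnotmem : ∀ (x : X) (B : Set X), B ∉ (S x).filter (fun Bp => key Bp < key B) := by
    intro x B
    simp only [Finset.mem_filter]; rintro ⟨-, h⟩; exact lt_irrefl _ h
  have hnum_le : ∀ x, ∀ B, B ∈ ℬ → ∀ B', key B < key B' →
      (∑ B'' ∈ (S x).filter (fun Bp => key Bp < key B), f B'' x) + f B x
        ≤ ∑ B'' ∈ (S x).filter (fun Bp => key Bp < key B'), f B'' x := by
    intro x B hB B' hlt
    by_cases hBS : B ∈ S x
    · have hins : (∑ B'' ∈ (S x).filter (fun Bp => key Bp < key B), f B'' x) + f B x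
          = ∑ B'' ∈ insert B ((S x).filter (fun Bp => key Bp < key B)), f B'' x := by
        rw [Finset.sum_insert (hnotmem x B)]; ring
      rw [hins]
      apply Finset.sum_le_sum_of_subset_of_nonneg
      · intro B'' hB''
        rw [Finset.mem_insert] at hB''
        rcases hB'' with rfl | hB''
        · exact Finset.mem_filter.mpr ⟨hBS, hlt⟩
        · rw [Finset.mem_filter] at hB'' ⊢
          exact ⟨hB''.1, hB''.2.trans hlt⟩
      · intro B'' _ _; exact hf_nonneg B'' x
    · rw [hf_zero x B hB hBS, add_zero]
      apply Finset.sum_le_sum_of_subset_of_nonneg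
      · exact Finset.monotone_filter_right _ (fun B'' _ h => h.trans hlt)
      · intro B'' _ _; exact hf_nonneg B'' x
  have hnum_le_F : ∀ x, ∀ B, B ∈ ℬ →
      (∑ B'' ∈ (S x).filter (fun Bp => key Bp < key B), f B'' x) + f B x ≤ F x := by
    intro x B hB
    rw [hFrfl]
    by_cases hBS : B ∈ S x
    · have hins : (∑ B'' ∈ (S x).filter (fun Bp => key Bp < key B), f B'' x) + f B x
          = ∑ B'' ∈ insert B ((S x).filter (fun Bp => key Bp < key B)), f B'' x := by
        rw [Finset.sum_insert (hnotmem x B)]; ring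
      rw [hins]
      apply Finset.sum_le_sum_of_subset_of_nonneg
      · intro B'' hB''
        rw [Finset.mem_insert] at hB''
        rcases hB'' with rfl | hB''
        · exact hBS
        · exact (Finset.mem_filter.mp hB'').1
      · intro B'' _ _; exact hf_nonneg B'' x
    · rw [hf_zero x B hB hBS, add_zero]
      apply Finset.sum_le_sum_of_subset_of_nonneg (Finset.filter_subset _ _)
      intro B'' _ _; exact hf_nonneg B'' x
  have hLnonneg : ∀ x B, 0 ≤ L B x :=
    fun x B => div_nonneg (Finset.sum_nonneg (fun B' _ => hf_nonneg B' x)) (hF0 x).le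
  have hLR : ∀ x B, L B x ≤ R B x := by
    intro x B
    rw [hRrfl]; simp only [le_add_iff_nonneg_right]
    exact div_nonneg (hf_nonneg B x) (hF0 x).le
  have hR1 : ∀ x, ∀ B, B ∈ ℬ → R B x ≤ 1 := by
    intro x B hB
    rw [hRrfl, hLrfl, ← add_div, div_le_one (hF0 x)]
    exact hnum_le_F x B hB
  have hRL : ∀ x B, R B x - L B x = f B x / F x := by
    intro x B; rw [hRrfl]; ring
  have hpos_iff : ∀ x B, L B x < R B x ↔ 0 < f B x := by
    intro x B
    rw [← sub_pos, hRL]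
    constructor
    · intro h
      by_contra h'
      push_neg at h'
      have h0 : f B x = 0 := le_antisymm h' (hf_nonneg B x)
      rw [h0, zero_div] at h
      exact lt_irrefl _ h
    · intro h; exact div_pos h (hF0 x)
  refine ⟨ℬ, L, R, ?_, ?_, ?_, ?_, ?_, ?_, ?_⟩
  · -- P1
    intro x
    obtain ⟨T, hTc, hTm⟩ := hTx x
    exact ⟨T, hTc, fun B hB h => hTm B hB ((hpos_iff x B).mp h)⟩
  · -- P2 non-overlap
    intro x B hB B' hB' hne
    rcases hkey_tri B B' hne with hlt | hlt
    · have hkle : R B x ≤ L B' x := by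
        rw [hRrfl, hLrfl, ← add_div, hLrfl]
        exact div_le_div_of_nonneg_right (hnum_le x B hB B' hlt) (hF0 x).le
      exact le_trans (le_trans (min_le_left _ _) hkle) (le_max_right _ _)
    · have hkle : R B' x ≤ L B x := by
        rw [hRrfl, hLrfl, ← add_div, hLrfl]
        exact div_le_div_of_nonneg_right (hnum_le x B' hB' B hlt) (hF0 x).le
      exact le_trans (le_trans (min_le_right _ _) hkle) (le_max_left _ _)
  · -- P3
    exact fun x B hB => ⟨hLnonneg x B, hLR x B, hR1 x B hB⟩
  · -- P4 tiling
    intro x t ht0 ht1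
    obtain ⟨Cm, hCmS, hCmmin⟩ := (S x).exists_min_image key (hSne x)
    have hL0 : L Cm x = 0 := by
      rw [hLrfl]
      have hemp : (S x).filter (fun Bp => key Bp < key Cm) = ∅ := by
        apply Finset.filter_eq_empty_iff.mpr
        intro B hB
        exact not_lt.mpr (hCmmin B hB)
      rw [hemp, Finset.sum_empty, zero_div]
    set A := (S x).filter (fun B => L B x ≤ t) with hAdef
    have hAne : A.Nonempty := ⟨Cm, Finset.mem_filter.mpr ⟨hCmS, by rw [hL0]; exact ht0⟩⟩
    obtain ⟨C, hCA, hCmax⟩ := A.exists_max_image key hAne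
    have hCS : C ∈ S x := (Finset.mem_filter.mp hCA).1
    have hCt : L C x ≤ t := (Finset.mem_filter.mp hCA).2
    by_cases hcase : t < R C x
    · exact ⟨C, ((hSmem x C).mp hCS).1, hCt, hcase⟩
    push_neg at hcase
    exfalso
    set Q := (S x).filter (fun B => key C < key B) with hQdef
    rcases Q.eq_empty_or_nonempty with hQe | hQne
    · have hSx : S x = insert C ((S x).filter (fun Bp => key Bp < key C)) := by
        ext B
        simp only [Finset.mem_insert, Finset.mem_filter]
        constructor
        · intro hB
          rcases lt_trichotomy (key B) (key C) with h | h | h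
          · exact Or.inr ⟨hB, h⟩
          · exact Or.inl (hkeyinj _ _ h)
          · exfalso
            have hBQ : B ∈ Q := Finset.mem_filter.mpr ⟨hB, h⟩
            rw [hQe] at hBQ; exact absurd hBQ (Finset.notMem_empty B)
        · rintro (rfl | ⟨hB, -⟩)
          · exact hCS
          · exact hB
      have hFeq : F x = f C x + ∑ B'' ∈ (S x).filter (fun Bp => key Bp < key C), f B'' x := by
        rw [hFrfl]
        conv_lhs => rw [hSx]
        rw [Finset.sum_insert (hnotmem x C)]
      have hR1' : R C x = 1 := by
        rw [hRrfl, hLrfl, ← add_div, div_eq_one_iff_eq (hF0 x).ne', hFeq]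
        ring
      rw [hR1'] at hcase
      exact absurd ht1 (not_lt.mpr hcase)
    · obtain ⟨C', hC'Q, hC'min⟩ := Q.exists_min_image key hQne
      have hC'S : C' ∈ S x := (Finset.mem_filter.mp hC'Q).1
      have hCC' : key C < key C' := (Finset.mem_filter.mp hC'Q).2
      have hfilt : (S x).filter (fun Bp => key Bp < key C')
          = insert C ((S x).filter (fun Bp => key Bp < key C)) := by
        ext B
        simp only [Finset.mem_insert, Finset.mem_filter]
        constructor
        · rintro ⟨hB, hBC'⟩
          rcases lt_trichotomy (key B) (key C) with h | h | h
          · exact Or.inr ⟨hB, h⟩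
          · exact Or.inl (hkeyinj _ _ h)
          · exfalso
            have hBQ : B ∈ Q := Finset.mem_filter.mpr ⟨hB, h⟩
            exact absurd hBC' (not_lt.mpr (hC'min B hBQ))
        · rintro (rfl | ⟨hB, hBC⟩)
          · exact ⟨hCS, hCC'⟩
          · exact ⟨hB, hBC.trans hCC'⟩
      have hLC' : L C' x = R C x := by
        rw [hRrfl, hLrfl C x, hLrfl C' x, ← add_div, hfilt,
          Finset.sum_insert (hnotmem x C), add_comm]
      have hC'A : C' ∈ A := Finset.mem_filter.mpr ⟨hC'S, by rw [hLC']; exact hcase⟩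
      exact absurd (hCmax C' hC'A) (not_le.mpr hCC')
  · -- P5 thick
    intro x
    obtain ⟨Bm, hBmS, hmax⟩ := (S x).exists_max_image (fun B => f B x) (hSne x)
    refine ⟨Bm, ((hSmem x Bm).mp hBmS).1, ?_⟩
    rw [hRL]
    have hfpos : 0 < f Bm x := ((hSmem x Bm).mp hBmS).2
    have hFle : F x ≤ (n + 1) * f Bm x := by
      calc F x ≤ (S x).card • f Bm x := Finset.sum_le_card_nsmul _ _ _ (fun B hB => hmax B hB)
        _ = ((S x).card : ℝ) * f Bm x := nsmul_eq_mul _ _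
        _ ≤ (n + 1) * f Bm x := by
            apply mul_le_mul_of_nonneg_right _ hfpos.le
            exact_mod_cast hScard x
    rw [div_le_div_iff₀ (by positivity) (hF0 x)]
    linarith
  · -- P6 Lipschitz
    intro B hB x x'
    set d := dist x x' with hd
    have hd0 : 0 ≤ d := dist_nonneg
    set V := S x ∪ S x' with hV
    have hVℬ : ∀ B' ∈ V, B' ∈ ℬ := by
      intro B' hB'
      rcases Finset.mem_union.mp hB' with h | h
      · exact ((hSmem x B').mp h).1
      · exact ((hSmem x' B').mp h).1
    have hcardV : (V.card : ℝ) ≤ 2 * ((n : ℝ) + 1) := by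
      have h0 := Finset.card_union_le (S x) (S x')
      rw [← hV] at h0
      have h1 := hScard x
      have h2 := hScard x'
      have h3 : (V.card : ℕ) ≤ 2 * (n + 1) := by omega
      exact_mod_cast h3
    set e := 2 * ((n : ℝ) + 1) * d with he
    have hWbound : ∀ W : Finset (Set X), W ⊆ V →
        |(∑ B' ∈ W, f B' x) - ∑ B' ∈ W, f B' x'| ≤ e := by
      intro W hW
      rw [← Finset.sum_sub_distrib]
      refine le_trans (Finset.abs_sum_le_sum_abs _ _) ?_
      calc ∑ B' ∈ W, |f B' x - f B' x'| ≤ W.card • d :=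
            Finset.sum_le_card_nsmul _ _ _ (fun B' _ => hf_lip B' x x')
        _ = (W.card : ℝ) * d := nsmul_eq_mul _ _
        _ ≤ e := by
            rw [he]
            apply mul_le_mul_of_nonneg_right _ hd0
            calc (W.card : ℝ) ≤ (V.card : ℝ) := by exact_mod_cast Finset.card_le_card hW
              _ ≤ 2 * ((n : ℝ) + 1) := hcardV
    have hFx : F x = ∑ B' ∈ V, f B' x := by
      rw [hFrfl]
      apply Finset.sum_subset Finset.subset_union_left
      intro B' hB'V hB'S
      exact hf_zero x B' (hVℬ B' hB'V) hB'S
    have hFx' : F x' = ∑ B' ∈ V, f B' x' := by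
      rw [hFrfl]
      apply Finset.sum_subset Finset.subset_union_right
      intro B' hB'V hB'S
      exact hf_zero x' B' (hVℬ B' hB'V) hB'S
    have hLsum : ∀ z, S z ⊆ V →
        (∑ B' ∈ (S z).filter (fun Bp => key Bp < key B), f B' z)
          = ∑ B' ∈ V.filter (fun Bp => key Bp < key B), f B' z := by
      intro z hz
      apply Finset.sum_subset (Finset.filter_subset_filter _ hz)
      intro B' hB'V hB'S
      rw [Finset.mem_filter] at hB'V
      apply hf_zero z B' (hVℬ B' hB'V.1)
      intro hmem
      exact hB'S (Finset.mem_filter.mpr ⟨hmem, hB'V.2⟩)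
    have hFe : |F x - F x'| ≤ e := by rw [hFx, hFx']; exact hWbound V (subset_refl V)
    have hae : |(∑ B' ∈ V.filter (fun Bp => key Bp < key B), f B' x)
        - ∑ B' ∈ V.filter (fun Bp => key Bp < key B), f B' x'| ≤ e :=
      hWbound _ (Finset.filter_subset _ _)
    have ha0 : 0 ≤ ∑ B' ∈ V.filter (fun Bp => key Bp < key B), f B' x :=
      Finset.sum_nonneg fun B' _ => hf_nonneg B' x
    have haM : (∑ B' ∈ V.filter (fun Bp => key Bp < key B), f B' x) ≤ (n + 1) * s := by
      refine le_trans ?_ (hFub x)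
      rw [hFx]
      apply Finset.sum_le_sum_of_subset_of_nonneg (Finset.filter_subset _ _)
      intro B'' _ _; exact hf_nonneg B'' x
    have hLbound : |L B x - L B x'| ≤ e / s + (n + 1) * s * e / s ^ 2 := by
      have hLx : L B x = (∑ B' ∈ V.filter (fun Bp => key Bp < key B), f B' x) / F x := by
        rw [hLrfl, hLsum x Finset.subset_union_left]
      have hLx' : L B x' = (∑ B' ∈ V.filter (fun Bp => key Bp < key B), f B' x') / F x' := by
        rw [hLrfl, hLsum x' Finset.subset_union_right]
      rw [hLx, hLx']
      exact quot_diff hs (hFlb x) (hFlb x') ha0 haM hae hFe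
    have hfae : |f B x - f B x'| ≤ e := by
      refine le_trans (hf_lip B x x') ?_
      rw [he]; nlinarith
    have hfbound : |f B x / F x - f B x' / F x'| ≤ e / s + s * e / s ^ 2 :=
      quot_diff hs (hFlb x) (hFlb x') (hf_nonneg B x) (hf_le B x) hfae hFe
    have hn0 : (0 : ℝ) ≤ (n : ℝ) := Nat.cast_nonneg n
    have hes : 0 ≤ e := by rw [he]; positivity
    constructor
    · refine le_trans hLbound ?_
      have heq : e / s + ((n : ℝ) + 1) * s * e / s ^ 2 = ((n : ℝ) + 2) * e / s := by
        field_simp; ring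
      rw [heq, he]
      rw [show (3 : ℝ) * ((n : ℝ) + 2) ^ 2 / s * d = 3 * ((n : ℝ) + 2) ^ 2 * d / s by ring]
      apply div_le_div_of_nonneg_right _ hs.le
      nlinarith
    · have habs : |R B x - R B x'| ≤ |L B x - L B x'| + |f B x / F x - f B x' / F x'| := by
        rw [hRrfl B x, hRrfl B x']
        have hrr : L B x + f B x / F x - (L B x' + f B x' / F x')
            = (L B x - L B x') + (f B x / F x - f B x' / F x') := by ring
        rw [hrr]
        exact abs_add_le _ _
      refine le_trans habs ?_
      refine le_trans (add_le_add hLbound hfbound) ?_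
      have heq : (e / s + ((n : ℝ) + 1) * s * e / s ^ 2) + (e / s + s * e / s ^ 2)
          = ((n : ℝ) + 4) * e / s := by
        field_simp; ring
      rw [heq, he]
      rw [show (3 : ℝ) * ((n : ℝ) + 2) ^ 2 / s * d = 3 * ((n : ℝ) + 2) ^ 2 * d / s by ring]
      apply div_le_div_of_nonneg_right _ hs.le
      nlinarith
  · -- P7 bounded
    intro B hB x x' h h'
    obtain ⟨b, hbB, hbd⟩ := hmem_ball B hB x ((hpos_iff x B).mp h)
    obtain ⟨b', hbB', hbd'⟩ := hmem_ball B hB x' ((hpos_iff x' B).mp h')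
    have hbb' : dist b b' ≤ c₀ * (2 * s) := by
      have h1 : edist b b' ≤ ENNReal.ofReal (c₀ * (2 * s)) :=
        le_trans (EMetric.edist_le_diam_of_mem hbB hbB') (hdiam B hB.1)
      rw [edist_dist] at h1
      exact (ENNReal.ofReal_le_ofReal_iff (by positivity)).mp h1
    have hb'x' : dist b' x' < s := by rw [dist_comm]; exact hbd'
    calc dist x x' ≤ dist x b + dist b b' + dist b' x' := dist_triangle4 _ _ _ _
      _ ≤ (2 * c₀ + 2) * s := by linarith

private lemma chain_bound {α β : Type*} (S : Finset α) (T : Finset β)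
    (la ra : α → ℝ) (lb rb : β → ℝ)
    (hS : ∀ a ∈ S, ∀ a' ∈ S, a ≠ a' → min (ra a) (ra a') ≤ max (la a) (la a'))
    (hT : ∀ b ∈ T, ∀ b' ∈ T, b ≠ b' → min (rb b) (rb b') ≤ max (lb b) (lb b')) :
    ((S ×ˢ T).filter fun q => max (la q.1) (lb q.2) < min (ra q.1) (rb q.2)).card
      ≤ S.card + T.card - 1 := by
  classical
  set key : α × β → ℝ := fun q => max (la q.1) (lb q.2) with hkeydef
  set P := ((S ×ˢ T).filter fun q => max (la q.1) (lb q.2) < min (ra q.1) (rb q.2)) with hPdef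
  have hPmem : ∀ q ∈ P, q.1 ∈ S ∧ q.2 ∈ T ∧ key q < min (ra q.1) (rb q.2) := by
    intro q hq
    rw [hPdef, Finset.mem_filter, Finset.mem_product] at hq
    exact ⟨hq.1.1, hq.1.2, hq.2⟩
  have hkey : ∀ q ∈ P, ∀ q' ∈ P, key q = key q' → q = q' := by
    rintro ⟨a, b⟩ hq ⟨a', b'⟩ hq' he
    obtain ⟨haS, hbT, hlt⟩ := hPmem _ hq
    obtain ⟨haS', hbT', hlt'⟩ := hPmem _ hq'
    simp only [hkeydef] at he hlt hlt'
    have hra : la a ⊔ lb b < ra a := lt_of_lt_of_le hlt (min_le_left _ _)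
    have hrb : la a ⊔ lb b < rb b := lt_of_lt_of_le hlt (min_le_right _ _)
    have hra' : la a ⊔ lb b < ra a' := by rw [he]; exact lt_of_lt_of_le hlt' (min_le_left _ _)
    have hrb' : la a ⊔ lb b < rb b' := by rw [he]; exact lt_of_lt_of_le hlt' (min_le_right _ _)
    have hla : la a ≤ la a ⊔ lb b := le_max_left _ _
    have hlb : lb b ≤ la a ⊔ lb b := le_max_right _ _
    have hla' : la a' ≤ la a ⊔ lb b := by rw [he]; exact le_max_left _ _
    have hlb' : lb b' ≤ la a ⊔ lb b := by rw [he]; exact le_max_right _ _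
    have ha : a = a' := by
      by_contra hne
      have h1 := hS a haS a' haS' hne
      rw [min_def, max_def] at h1
      split_ifs at h1 <;> linarith
    have hb : b = b' := by
      by_contra hne
      have h1 := hT b hbT b' hbT' hne
      rw [min_def, max_def] at h1
      split_ifs at h1 <;> linarith
    rw [ha, hb]
  rcases P.eq_empty_or_nonempty with hPe | hPne
  · rw [hPe]; simp
  obtain ⟨q₀, hq₀P, hmin⟩ := P.exists_min_image key hPne
  obtain ⟨ha₀S, hb₀T, -⟩ := hPmem _ hq₀P
  set bad : α ⊕ β := if lb q₀.2 ≤ la q₀.1 then Sum.inr q₀.2 else Sum.inl q₀.1 with hbad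
  set φ : α × β → α ⊕ β := fun q => if lb q.2 ≤ la q.1 then Sum.inl q.1 else Sum.inr q.2 with hφ
  set U : Finset (α ⊕ β) := (S.image Sum.inl ∪ T.image Sum.inr).erase bad with hU
  have hmaps : ∀ q ∈ P, φ q ∈ U := by
    intro q hq
    obtain ⟨haS, hbT, hlt⟩ := hPmem _ hq
    rw [hU, Finset.mem_erase]
    refine ⟨?_, ?_⟩
    · rw [hφ, hbad]
      by_cases h1 : lb q.2 ≤ la q.1 <;> by_cases h2 : lb q₀.2 ≤ la q₀.1 <;>
        simp only [h1, h2, if_true, if_false, ne_eq]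
      · simp
      · push_neg at h2
        intro hc
        simp only [Sum.inl.injEq] at hc
        have hkq : key q = la q.1 := max_eq_left h1
        have hkq₀ : key q₀ = lb q₀.2 := max_eq_right h2.le
        have h3 := hmin q hq
        rw [hkq, hkq₀, hc] at h3
        exact absurd (h3.trans_lt h2) (lt_irrefl _)
      · push_neg at h1
        intro hc
        simp only [Sum.inr.injEq] at hc
        have hkq : key q = lb q₀.2 := by rw [hkeydef]; simp only []; rw [max_eq_right h1.le, hc]
        have hkq₀ : key q₀ = la q₀.1 := max_eq_left h2
        have h4 : key q₀ = key q := le_antisymm (hmin q hq) (by rw [hkq, hkq₀]; exact h2)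
        have h5 := hkey q₀ hq₀P q hq h4
        rw [h5] at h2
        exact absurd h2 (not_le.mpr h1)
      · simp
    · rw [hφ]
      by_cases h1 : lb q.2 ≤ la q.1 <;> simp only [h1, if_true, if_false, Finset.mem_union]
      · exact Or.inl (Finset.mem_image_of_mem _ haS)
      · exact Or.inr (Finset.mem_image_of_mem _ hbT)
  have hinj : ∀ q ∈ P, ∀ q' ∈ P, φ q = φ q' → q = q' := by
    intro q hq q' hq' he
    rw [hφ] at he
    by_cases h1 : lb q.2 ≤ la q.1 <;> by_cases h2 : lb q'.2 ≤ la q'.1 <;>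
      simp only [h1, h2, if_true, if_false] at he
    · have hc : q.1 = q'.1 := by simpa using he
      apply hkey q hq q' hq'
      rw [hkeydef]; simp only []
      rw [max_eq_left h1, max_eq_left h2, hc]
    · simp at he
    · simp at he
    · push_neg at h1 h2
      have hc : q.2 = q'.2 := by simpa using he
      apply hkey q hq q' hq'
      rw [hkeydef]; simp only []
      rw [max_eq_right h1.le, max_eq_right h2.le, hc]
  have h1 : P.card ≤ U.card := by
    apply Finset.card_le_card_of_injOn φ hmaps
    intro q hq q' hq' he
    exact hinj q (Finset.mem_coe.mp hq) q' (Finset.mem_coe.mp hq') he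
  have hbadmem : bad ∈ S.image Sum.inl ∪ T.image Sum.inr := by
    rw [hbad]; split_ifs
    · exact Finset.mem_union_right _ (Finset.mem_image_of_mem _ hb₀T)
    · exact Finset.mem_union_left _ (Finset.mem_image_of_mem _ ha₀S)
  have h2 : U.card = (S.image Sum.inl ∪ T.image Sum.inr).card - 1 :=
    Finset.card_erase_of_mem hbadmem
  have h3 : (S.image Sum.inl ∪ T.image Sum.inr).card ≤ S.card + T.card :=
    le_trans (Finset.card_union_le _ _)
      (add_le_add Finset.card_image_le Finset.card_image_le)
  calc P.card ≤ U.card := h1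
    _ ≤ S.card + T.card - 1 := by rw [h2]; exact Nat.sub_le_sub_right h3 1
set_option maxHeartbeats 1000000 in
private lemma nagata_prod {X Y : Type*} [MetricSpace X] [MetricSpace Y] {n m : ℕ}
    (hX : NagataProp X n) (hY : NagataProp Y m) : NagataProp (X × Y) (n + m) := by
  classical
  obtain ⟨cX, hcX, HX⟩ := exists_pkg hX
  obtain ⟨cY, hcY, HY⟩ := exists_pkg hY
  set θ : ℝ := 1 / (((n : ℝ) + 1) * ((m : ℝ) + 3)) with hθdef
  set KK : ℝ := 3 * ((n : ℝ) + 2) ^ 2 + 3 * ((m : ℝ) + 2) ^ 2 with hKKdef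
  set Λ : ℝ := 4 * KK * (((n : ℝ) + 1) * ((m : ℝ) + 3)) with hΛdef
  have hθ : 0 < θ := by rw [hθdef]; positivity
  have hKK : 0 < KK := by rw [hKKdef]; positivity
  have hΛ : 0 < Λ := by rw [hΛdef]; positivity
  refine ⟨max cX cY * Λ, by positivity, ?_⟩
  intro σ hσ
  set s := Λ * σ with hsdef
  have hs : 0 < s := by rw [hsdef]; positivity
  obtain ⟨ℬX, LX, RX, P1X, P2X, P3X, P4X, P5X, P6X, P7X⟩ := HX s hs
  obtain ⟨ℬY, LY, RY, P1Y, P2Y, P3Y, P4Y, P5Y, P6Y, P7Y⟩ := HY s hs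
  set ov : Set X → Set Y → X × Y → ℝ := fun B C p =>
    min (RX B p.1) (RY C p.2) - max (LX B p.1) (LY C p.2) with hovdef
  have hovrfl : ∀ B C p, ov B C p
      = min (RX B p.1) (RY C p.2) - max (LX B p.1) (LY C p.2) := fun _ _ _ => rfl
  set G : Set X → Set Y → Set (X × Y) := fun B C => {p | θ / 2 < ov B C p} with hGdef
  have hGmem : ∀ B C p, p ∈ G B C ↔ θ / 2 < ov B C p := fun _ _ _ => Iff.rfl
  set 𝓖 : Set (Set (X × Y)) := {W | ∃ B ∈ ℬX, ∃ C ∈ ℬY, W = G B C} with h𝓖def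
  have hovX : ∀ B C p, ov B C p ≤ RX B p.1 - LX B p.1 :=
    fun B C p => sub_le_sub (min_le_left _ _) (le_max_left _ _)
  have hovY : ∀ B C p, ov B C p ≤ RY C p.2 - LY C p.2 :=
    fun B C p => sub_le_sub (min_le_right _ _) (le_max_right _ _)
  refine ⟨𝓖, ?_, ?_, ?_⟩
  · -- covering
    apply eq_univ_of_forall
    intro p
    rw [mem_sUnion]
    obtain ⟨Bm, hBm, hthick⟩ := P5X p.1
    obtain ⟨hlo0, hlohi, hhi1⟩ := P3X p.1 Bm hBm
    have hhpos : 0 < RX Bm p.1 - LX Bm p.1 :=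
      lt_of_lt_of_le (by positivity) hthick
    set u : ℝ := (RX Bm p.1 - LX Bm p.1) / ((m : ℝ) + 3) with hudef
    have hu0 : 0 < u := by rw [hudef]; positivity
    have huh : ((m : ℝ) + 3) * u = RX Bm p.1 - LX Bm p.1 := by rw [hudef]; field_simp
    have hθu : θ ≤ u := by
      rw [hθdef, hudef, ← div_div]
      exact div_le_div_of_nonneg_right hthick (by positivity)
    have htkval : ∀ k : Fin (m + 2), (k.val : ℝ) + 1 ≤ (m : ℝ) + 2 := by
      intro k
      have hk : k.val + 1 ≤ m + 2 := k.isLt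
      exact_mod_cast hk
    have htk0 : ∀ k : Fin (m + 2), 0 ≤ LX Bm p.1 + ((k.val : ℝ) + 1) * u := by
      intro k
      have hpos : (0:ℝ) ≤ ((k.val : ℝ) + 1) * u := by positivity
      linarith
    have htkh : ∀ k : Fin (m + 2), ((k.val : ℝ) + 1) * u < RX Bm p.1 - LX Bm p.1 := by
      intro k
      have h2 : ((k.val : ℝ) + 1) * u ≤ ((m : ℝ) + 2) * u :=
        mul_le_mul_of_nonneg_right (htkval k) hu0.le
      nlinarith [hu0, huh]
    have htk1 : ∀ k : Fin (m + 2), LX Bm p.1 + ((k.val : ℝ) + 1) * u < 1 := by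
      intro k
      have := htkh k
      linarith
    have hsel : ∀ k : Fin (m + 2), ∃ C ∈ ℬY,
        LY C p.2 ≤ LX Bm p.1 + ((k.val : ℝ) + 1) * u ∧
        LX Bm p.1 + ((k.val : ℝ) + 1) * u < RY C p.2 :=
      fun k => P4Y p.2 _ (htk0 k) (htk1 k)
    choose Csel hCselℬ hCselL hCselR using hsel
    obtain ⟨TY, hTYc, hTYm⟩ := P1Y p.2
    have hmaps : ∀ k : Fin (m + 2), k ∈ (Finset.univ : Finset (Fin (m + 2))) → Csel k ∈ TY :=
      fun k _ => hTYm (Csel k) (hCselℬ k) (lt_of_le_of_lt (hCselL k) (hCselR k))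
    have hcard : TY.card < (Finset.univ : Finset (Fin (m + 2))).card := by
      rw [Finset.card_univ, Fintype.card_fin]
      omega
    obtain ⟨k, -, k', -, hkk', heq⟩ :=
      Finset.exists_ne_map_eq_of_card_lt_of_maps_to hcard hmaps
    have main : ∀ a b : Fin (m + 2), a.val < b.val → Csel a = Csel b →
        ∃ W ∈ 𝓖, p ∈ W := by
      intro a b hab hCab
      refine ⟨G Bm (Csel a), ⟨Bm, hBm, Csel a, hCselℬ a, rfl⟩, ?_⟩
      rw [hGmem, hovrfl]
      have h1 : LY (Csel a) p.2 ≤ LX Bm p.1 + ((a.val : ℝ) + 1) * u := hCselL a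
      have h2 : LX Bm p.1 + ((b.val : ℝ) + 1) * u < RY (Csel a) p.2 := by
        rw [hCab]; exact hCselR b
      have h3 : LX Bm p.1 + ((b.val : ℝ) + 1) * u < RX Bm p.1 := by
        have := htkh b; linarith
      have hba : (a.val : ℝ) + 1 ≤ (b.val : ℝ) := by exact_mod_cast hab
      have hmin : LX Bm p.1 + ((b.val : ℝ) + 1) * u
          < min (RX Bm p.1) (RY (Csel a) p.2) := lt_min h3 h2
      have hmax : max (LX Bm p.1) (LY (Csel a) p.2)
          ≤ LX Bm p.1 + ((a.val : ℝ) + 1) * u := by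
        apply max_le _ h1
        have hpos : (0:ℝ) ≤ ((a.val : ℝ) + 1) * u := by positivity
        linarith
      have hgap : u ≤ ((b.val : ℝ) + 1) * u - ((a.val : ℝ) + 1) * u := by nlinarith [hu0]
      linarith [hθ, hθu]
    rcases Nat.lt_or_ge k.val k'.val with hlt | hge
    · exact main k k' hlt heq
    · have hlt : k'.val < k.val := by
        rcases Nat.lt_or_ge k'.val k.val with hl | hl
        · exact hl
        · exact absurd (Fin.ext (le_antisymm hl hge)) hkk'
      exact main k' k hlt heq.symm
  · -- diameter
    rintro W ⟨B, hB, C, hC, rfl⟩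
    apply EMetric.diam_le
    intro p hp q hq
    rw [hGmem] at hp hq
    have hpx : LX B p.1 < RX B p.1 :=
      sub_pos.mp (lt_of_lt_of_le (lt_trans (half_pos hθ) hp) (hovX B C p))
    have hqx : LX B q.1 < RX B q.1 :=
      sub_pos.mp (lt_of_lt_of_le (lt_trans (half_pos hθ) hq) (hovX B C q))
    have hpy : LY C p.2 < RY C p.2 :=
      sub_pos.mp (lt_of_lt_of_le (lt_trans (half_pos hθ) hp) (hovY B C p))
    have hqy : LY C q.2 < RY C q.2 :=
      sub_pos.mp (lt_of_lt_of_le (lt_trans (half_pos hθ) hq) (hovY B C q))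
    have hdx : dist p.1 q.1 ≤ cX * s := P7X B hB p.1 q.1 hpx hqx
    have hdy : dist p.2 q.2 ≤ cY * s := P7Y C hC p.2 q.2 hpy hqy
    rw [edist_dist]
    apply ENNReal.ofReal_le_ofReal
    rw [Prod.dist_eq]
    have hms : max cX cY * Λ * σ = max cX cY * s := by rw [hsdef]; ring
    rw [hms]
    apply max_le
    · exact le_trans hdx (mul_le_mul_of_nonneg_right (le_max_left _ _) hs.le)
    · exact le_trans hdy (mul_le_mul_of_nonneg_right (le_max_right _ _) hs.le)
  · -- multiplicity
    intro E hE
    rcases E.eq_empty_or_nonempty with rfl | ⟨p₀, hp₀⟩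
    · refine ⟨∅, by simp, fun W _ hW => absurd hW (by simp)⟩
    obtain ⟨TX, hTXc, hTXm⟩ := P1X p₀.1
    obtain ⟨TY, hTYc, hTYm⟩ := P1Y p₀.2
    set SX := TX.filter (fun B => B ∈ ℬX) with hSXdef
    set SY := TY.filter (fun C => C ∈ ℬY) with hSYdef
    set Pf := (SX ×ˢ SY).filter
      (fun q => max (LX q.1 p₀.1) (LY q.2 p₀.2) < min (RX q.1 p₀.1) (RY q.2 p₀.2)) with hPfdef
    refine ⟨Pf.image (fun q => G q.1 q.2), ?_, ?_⟩
    · refine le_trans Finset.card_image_le ?_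
      have hcb := chain_bound SX SY (fun B => LX B p₀.1) (fun B => RX B p₀.1)
        (fun C => LY C p₀.2) (fun C => RY C p₀.2)
        (fun B hB B' hB' hne => P2X p₀.1 B (Finset.mem_filter.mp hB).2
          B' (Finset.mem_filter.mp hB').2 hne)
        (fun C hC C' hC' hne => P2Y p₀.2 C (Finset.mem_filter.mp hC).2
          C' (Finset.mem_filter.mp hC').2 hne)
      refine le_trans hcb ?_
      have h1 : SX.card ≤ n + 1 := le_trans (Finset.card_le_card (Finset.filter_subset _ _)) hTXc
      have h2 : SY.card ≤ m + 1 := le_trans (Finset.card_le_card (Finset.filter_subset _ _)) hTYc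
      omega
    · rintro W ⟨B, hB, C, hC, rfl⟩ ⟨p, hpG, hpE⟩
      rw [hGmem] at hpG
      -- transfer overlap from p to p₀
      have hdpp : dist p p₀ ≤ σ := by
        have h1 : edist p p₀ ≤ ENNReal.ofReal σ :=
          le_trans (EMetric.edist_le_diam_of_mem hpE hp₀) hE
        rw [edist_dist] at h1
        exact (ENNReal.ofReal_le_ofReal_iff hσ.le).mp h1
      have hd1 : dist p.1 p₀.1 ≤ σ := by
        refine le_trans ?_ hdpp
        rw [Prod.dist_eq]; exact le_max_left _ _
      have hd2 : dist p.2 p₀.2 ≤ σ := by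
        refine le_trans ?_ hdpp
        rw [Prod.dist_eq]; exact le_max_right _ _
      have hconv : ∀ A : ℝ, 0 ≤ A → A / s * σ = A / Λ := by
        intro A hA
        rw [hsdef]
        field_simp
      have hXshift : ∀ z z' : X, dist z z' ≤ σ →
          |LX B z - LX B z'| ≤ 3 * ((n : ℝ) + 2) ^ 2 / Λ ∧
          |RX B z - RX B z'| ≤ 3 * ((n : ℝ) + 2) ^ 2 / Λ := by
        intro z z' hzz
        obtain ⟨hL, hR⟩ := P6X B hB z z'
        have hb : 3 * ((n : ℝ) + 2) ^ 2 / s * dist z z' ≤ 3 * ((n : ℝ) + 2) ^ 2 / Λ := by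
          rw [← hconv (3 * ((n : ℝ) + 2) ^ 2) (by positivity)]
          exact mul_le_mul_of_nonneg_left hzz (by positivity)
        exact ⟨le_trans hL hb, le_trans hR hb⟩
      have hYshift : ∀ z z' : Y, dist z z' ≤ σ →
          |LY C z - LY C z'| ≤ 3 * ((m : ℝ) + 2) ^ 2 / Λ ∧
          |RY C z - RY C z'| ≤ 3 * ((m : ℝ) + 2) ^ 2 / Λ := by
        intro z z' hzz
        obtain ⟨hL, hR⟩ := P6Y C hC z z'
        have hb : 3 * ((m : ℝ) + 2) ^ 2 / s * dist z z' ≤ 3 * ((m : ℝ) + 2) ^ 2 / Λ := by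
          rw [← hconv (3 * ((m : ℝ) + 2) ^ 2) (by positivity)]
          exact mul_le_mul_of_nonneg_left hzz (by positivity)
        exact ⟨le_trans hL hb, le_trans hR hb⟩
      obtain ⟨hLX1, hRX1⟩ := hXshift p.1 p₀.1 hd1
      obtain ⟨hLY1, hRY1⟩ := hYshift p.2 p₀.2 hd2
      have hminshift : |min (RX B p.1) (RY C p.2) - min (RX B p₀.1) (RY C p₀.2)| ≤ KK / Λ := by
        refine le_trans (abs_min_sub_min_le_max _ _ _ _) ?_
        apply max_le
        · refine le_trans hRX1 (div_le_div_of_nonneg_right ?_ hΛ.le)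
          rw [hKKdef]
          have hsq : (0:ℝ) ≤ 3 * ((m:ℝ) + 2) ^ 2 := by positivity
          linarith
        · refine le_trans hRY1 (div_le_div_of_nonneg_right ?_ hΛ.le)
          rw [hKKdef]
          have hsq : (0:ℝ) ≤ 3 * ((n:ℝ) + 2) ^ 2 := by positivity
          linarith
      have hmaxshift : |max (LX B p.1) (LY C p.2) - max (LX B p₀.1) (LY C p₀.2)| ≤ KK / Λ := by
        refine le_trans (abs_max_sub_max_le_max _ _ _ _) ?_
        apply max_le
        · refine le_trans hLX1 (div_le_div_of_nonneg_right ?_ hΛ.le)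
          rw [hKKdef]
          have hsq : (0:ℝ) ≤ 3 * ((m:ℝ) + 2) ^ 2 := by positivity
          linarith
        · refine le_trans hLY1 (div_le_div_of_nonneg_right ?_ hΛ.le)
          rw [hKKdef]
          have hsq : (0:ℝ) ≤ 3 * ((n:ℝ) + 2) ^ 2 := by positivity
          linarith
      have hshifteq : 2 * (KK / Λ) = θ / 2 := by
        rw [hΛdef, hθdef]
        field_simp
        ring
      have hov₀ : 0 < ov B C p₀ := by
        have e1 := abs_le.mp hminshift
        have e2 := abs_le.mp hmaxshift
        rw [hovrfl] at hpG ⊢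
        have e3 : KK / Λ > 0 := by positivity
        nlinarith [hpG, e1.1, e1.2, e2.1, e2.2, hshifteq]
      have hBpos : LX B p₀.1 < RX B p₀.1 := by
        have := hovX B C p₀; linarith
      have hCpos : LY C p₀.2 < RY C p₀.2 := by
        have := hovY B C p₀; linarith
      have hpair : (B, C) ∈ Pf := by
        rw [hPfdef, Finset.mem_filter, Finset.mem_product]
        refine ⟨⟨?_, ?_⟩, ?_⟩
        · exact Finset.mem_filter.mpr ⟨hTXm B hB hBpos, hB⟩
        · exact Finset.mem_filter.mpr ⟨hTYm C hC hCpos, hC⟩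
        · rw [hovrfl] at hov₀
          simp only []
          linarith
      exact Finset.mem_image_of_mem (fun q => G q.1 q.2) hpair

private lemma nagataDim_le_of_prop {X : Type*} [MetricSpace X] {n : ℕ} (h : NagataProp X n) :
    nagataDim X ≤ (n : ℕ∞) :=
  sInf_le ⟨n, rfl, h⟩

theorem nagataDim_prod_le {X X' : Type*} [MetricSpace X] [MetricSpace X']
    [Nonempty X] [Nonempty X'] :
    nagataDim (X × X') ≤ nagataDim X + nagataDim X' := by
  classical
  by_cases hX : ∃ n : ℕ, NagataProp X n
  · by_cases hY : ∃ n : ℕ, NagataProp X' n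
    · have hdX : nagataDim X = (Nat.find hX : ℕ∞) := by
        apply le_antisymm (nagataDim_le_of_prop (Nat.find_spec hX))
        apply le_sInf
        rintro k ⟨j, rfl, hj⟩
        exact Nat.cast_le.mpr (Nat.find_min' hX hj)
      have hdY : nagataDim X' = (Nat.find hY : ℕ∞) := by
        apply le_antisymm (nagataDim_le_of_prop (Nat.find_spec hY))
        apply le_sInf
        rintro k ⟨j, rfl, hj⟩
        exact Nat.cast_le.mpr (Nat.find_min' hY hj)
      calc nagataDim (X × X') ≤ ((Nat.find hX + Nat.find hY : ℕ) : ℕ∞) :=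
            nagataDim_le_of_prop (nagata_prod (Nat.find_spec hX) (Nat.find_spec hY))
        _ = nagataDim X + nagataDim X' := by
            rw [hdX, hdY, Nat.cast_add]
    · have hY' : nagataDim X' = ⊤ := by
        rw [nagataDim]
        suffices he : {k : ℕ∞ | ∃ n : ℕ, k = n ∧ NagataProp X' n} = ∅ by
          rw [he]; exact sInf_empty
        rw [eq_empty_iff_forall_notMem]
        rintro k ⟨j, rfl, hj⟩
        exact hY ⟨j, hj⟩
      rw [hY', add_top]
      exact le_top
  · have hX' : nagataDim X = ⊤ := by
      rw [nagataDim]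
      suffices he : {k : ℕ∞ | ∃ n : ℕ, k = n ∧ NagataProp X n} = ∅ by
        rw [he]; exact sInf_empty
      rw [eq_empty_iff_forall_notMem]
      rintro k ⟨j, rfl, hj⟩
      exact hX ⟨j, hj⟩
    rw [hX', top_add]
    exact le_top
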